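/- Assume d = 1/4 (with a, b, e ∈ ℝ arbitrary). Let u be a solution of the Longstaff–Schwartz equation on Ω, and let ε ∈ ℝ. Then the function w(x,y,t) = u( x, (2·e^{et/2}·√y − ε)² · e^{-et}/4, t ) satisfies the Longstaff–Schwartz equation at every point (x,y,t) ∈ Ω with 2·e^{et/2}·√y > ε. -/

import Mathlib

/-- Partial derivative in `x`. -/
noncomputable def pdX (u : ℝ → ℝ → ℝ → ℝ) (x y t : ℝ) : ℝ := deriv (fun z => u z y t) x

/-- Partial derivative in `y`. -/
noncomputable def pdY (u : ℝ → ℝ → ℝ → ℝ) (x y t : ℝ) : ℝ := deriv (fun z => u x z t) y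

/-- Partial derivative in `t`. -/
noncomputable def pdT (u : ℝ → ℝ → ℝ → ℝ) (x y t : ℝ) : ℝ := deriv (fun z => u x y z) t

/-- Second partial derivative in `x`. -/
noncomputable def pdXX (u : ℝ → ℝ → ℝ → ℝ) (x y t : ℝ) : ℝ := deriv (fun z => pdX u z y t) x

/-- Second partial derivative in `y`. -/
noncomputable def pdYY (u : ℝ → ℝ → ℝ → ℝ) (x y t : ℝ) : ℝ := deriv (fun z => pdY u x z t) y

/-- The domain `Ω = {(x,y,t) : x > 0, y > 0}`. -/
def Omega : Set (ℝ × ℝ × ℝ) := {p | 0 < p.1 ∧ 0 < p.2.1}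

/-- The Longstaff–Schwartz (Kolmogorov backward) equation
`u_t = −((a−bx)·u_x + (d−ey)·u_y + (x/2)·u_xx + (y/2)·u_yy)` holds at the point `(x,y,t)`. -/
def LSEq (a b d e : ℝ) (u : ℝ → ℝ → ℝ → ℝ) (x y t : ℝ) : Prop :=
  pdT u x y t =
    -((a - b * x) * pdX u x y t + (d - e * y) * pdY u x y t +
      x / 2 * pdXX u x y t + y / 2 * pdYY u x y t)

/-- `u` is a solution of the Longstaff–Schwartz equation on `Ω`: it is C² on `Ω` and
satisfies the equation at every point of `Ω`. -/
def IsLSSolution (a b d e : ℝ) (u : ℝ → ℝ → ℝ → ℝ) : Prop :=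
  ContDiffOn ℝ 2 (fun p : ℝ × ℝ × ℝ => u p.1 p.2.1 p.2.2) Omega ∧
  ∀ x y t : ℝ, 0 < x → 0 < y → LSEq a b d e u x y t

lemma isOpen_Omega' : IsOpen Omega :=
  (isOpen_lt continuous_const continuous_fst).inter
    (isOpen_lt continuous_const (continuous_fst.comp continuous_snd))

lemma sliceY_gen (U : ℝ×ℝ×ℝ → ℝ) {x y t : ℝ} (hd : DifferentiableAt ℝ U (x,y,t)) :
    HasDerivAt (fun z => U (x,z,t)) (fderiv ℝ U (x,y,t) (0,1,0)) y :=
  hd.hasFDerivAt.comp_hasDerivAt y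
    ((hasDerivAt_const y x).prodMk ((hasDerivAt_id y).prodMk (hasDerivAt_const y t)))

lemma sliceX_gen (U : ℝ×ℝ×ℝ → ℝ) {x y t : ℝ} (hd : DifferentiableAt ℝ U (x,y,t)) :
    HasDerivAt (fun z => U (z,y,t)) (fderiv ℝ U (x,y,t) (1,0,0)) x :=
  hd.hasFDerivAt.comp_hasDerivAt x
    ((hasDerivAt_id x).prodMk ((hasDerivAt_const x y).prodMk (hasDerivAt_const x t)))

lemma sliceT_gen (U : ℝ×ℝ×ℝ → ℝ) {x y t : ℝ} (hd : DifferentiableAt ℝ U (x,y,t)) :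
    HasDerivAt (fun z => U (x,y,z)) (fderiv ℝ U (x,y,t) (0,0,1)) t :=
  hd.hasFDerivAt.comp_hasDerivAt t
    ((hasDerivAt_const t x).prodMk ((hasDerivAt_const t y).prodMk (hasDerivAt_id t)))

noncomputable def LSc (e ε t : ℝ) : ℝ := ε/2 * Real.exp (-(e*t)/2)

lemma LSc_hasDerivAt (e ε t : ℝ) :
    HasDerivAt (fun τ => LSc e ε τ) (-(e/2) * LSc e ε t) t := by
  have h1 : HasDerivAt (fun τ : ℝ => -(e*τ)/2) (-e/2) t := by
    simpa using (((hasDerivAt_id t).const_mul e).neg.div_const 2)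
  have h2 := (h1.exp).const_mul (ε/2)
  refine h2.congr_deriv ?_
  simp [LSc]; ring

lemma split3 (L : (ℝ×ℝ×ℝ) →L[ℝ] ℝ) (m : ℝ) :
    L ((0:ℝ), m, (1:ℝ)) = m * L (0,1,0) + L (0,0,1) := by
  have h : ((0:ℝ), m, (1:ℝ)) = m • ((0:ℝ),(1:ℝ),(0:ℝ)) + ((0:ℝ),(0:ℝ),(1:ℝ)) := by
    simp [Prod.ext_iff]
  rw [h, map_add, map_smul, smul_eq_mul]

lemma splitY (L : (ℝ×ℝ×ℝ) →L[ℝ] ℝ) (m : ℝ) :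
    L ((0:ℝ), m, (0:ℝ)) = m * L (0,1,0) := by
  have h : ((0:ℝ), m, (0:ℝ)) = m • ((0:ℝ),(1:ℝ),(0:ℝ)) := by
    simp [Prod.ext_iff]
  rw [h, map_smul, smul_eq_mul]

lemma algebra_key (aa bb e x y r C A1 A2 A11 A22 T3 : ℝ) (hr : r ≠ 0) (hy : r^2 = y)
    (hu : T3 = -((aa - bb*x)*A1 + (1/4 - e*(r-C)^2)*A2 + x/2*A11 + (r-C)^2/2*A22)) :
    e*C*(r-C)*A2 + T3
      = -((aa - bb*x)*A1 + (1/4 - e*y)*(A2*((r-C)/r)) + x/2*A11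
          + y/2*((r-C)/r*A22*((r-C)/r) + A2*(C/(2*r^3)))) := by
  subst hy hu
  field_simp
  ring

lemma core (a b e : ℝ) (u : ℝ → ℝ → ℝ → ℝ)
    (hC2 : ContDiffOn ℝ 2 (fun p : ℝ×ℝ×ℝ => u p.1 p.2.1 p.2.2) Omega)
    (hEq : ∀ x y t : ℝ, 0 < x → 0 < y → LSEq a b (1/4) e u x y t)
    (ε x y t : ℝ) (hx : 0 < x) (hy : 0 < y) (hsc : LSc e ε t < Real.sqrt y) :
    LSEq a b (1/4) e (fun x y t => u x ((Real.sqrt y - LSc e ε t)^2) t) x y t := by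
  have hOpen := isOpen_Omega'
  have hs0 : (0:ℝ) < Real.sqrt y := Real.sqrt_pos.2 hy
  have hs2 : Real.sqrt y ^ 2 = y := Real.sq_sqrt hy.le
  have hg : (0:ℝ) < Real.sqrt y - LSc e ε t := sub_pos.2 hsc
  have hT : (0:ℝ) < (Real.sqrt y - LSc e ε t)^2 := pow_pos hg 2
  have hp0 : ((x, (Real.sqrt y - LSc e ε t)^2, t) : ℝ×ℝ×ℝ) ∈ Omega := ⟨hx, hT⟩
  have hdiff : ∀ q ∈ Omega, DifferentiableAt ℝ (fun p : ℝ×ℝ×ℝ => u p.1 p.2.1 p.2.2) q :=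
    fun q hq => (hC2.differentiableOn (by norm_num)).differentiableAt (hOpen.mem_nhds hq)
  have hdU := hdiff _ hp0
  have hfd : ContDiffOn ℝ 1 (fun p => fderiv ℝ (fun p : ℝ×ℝ×ℝ => u p.1 p.2.1 p.2.2) p) Omega :=
    hC2.fderiv_of_isOpen hOpen (by norm_num)
  have hV : DifferentiableOn ℝ
      (fun p => fderiv ℝ (fun p : ℝ×ℝ×ℝ => u p.1 p.2.1 p.2.2) p ((0:ℝ),(1:ℝ),(0:ℝ))) Omega :=
    (hfd.differentiableOn one_ne_zero).clm_apply (differentiableOn_const _)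
  have hVat : DifferentiableAt ℝ
      (fun p => fderiv ℝ (fun p : ℝ×ℝ×ℝ => u p.1 p.2.1 p.2.2) p ((0:ℝ),(1:ℝ),(0:ℝ)))
      (x, (Real.sqrt y - LSc e ε t)^2, t) :=
    hV.differentiableAt (hOpen.mem_nhds hp0)
  -- first partials of u at the shifted point, as fderiv applications
  have hP1eq : pdX u x ((Real.sqrt y - LSc e ε t)^2) t
      = fderiv ℝ (fun p : ℝ×ℝ×ℝ => u p.1 p.2.1 p.2.2) (x, (Real.sqrt y - LSc e ε t)^2, t) (1,0,0) :=
    (sliceX_gen _ hdU).deriv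
  have hP2eq : pdY u x ((Real.sqrt y - LSc e ε t)^2) t
      = fderiv ℝ (fun p : ℝ×ℝ×ℝ => u p.1 p.2.1 p.2.2) (x, (Real.sqrt y - LSc e ε t)^2, t) (0,1,0) :=
    (sliceY_gen _ hdU).deriv
  have hP3eq : pdT u x ((Real.sqrt y - LSc e ε t)^2) t
      = fderiv ℝ (fun p : ℝ×ℝ×ℝ => u p.1 p.2.1 p.2.2) (x, (Real.sqrt y - LSc e ε t)^2, t) (0,0,1) :=
    (sliceT_gen _ hdU).deriv
  have hP2 : HasDerivAt (fun z => u x z t) (pdY u x ((Real.sqrt y - LSc e ε t)^2) t)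
      ((Real.sqrt y - LSc e ε t)^2) := hP2eq ▸ sliceY_gen _ hdU
  -- inner y-derivative
  have hinner : HasDerivAt (fun z => (Real.sqrt z - LSc e ε t)^2)
      ((Real.sqrt y - LSc e ε t)/Real.sqrt y) y := by
    have h := ((Real.hasDerivAt_sqrt hy.ne').sub_const (LSc e ε t)).pow 2
    refine h.congr_deriv (Eq.symm ?_)
    field_simp
    ring
  -- pdY of w
  have hB : pdY (fun x y t => u x ((Real.sqrt y - LSc e ε t)^2) t) x y t
      = pdY u x ((Real.sqrt y - LSc e ε t)^2) t * ((Real.sqrt y - LSc e ε t)/Real.sqrt y) := by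
    have h := hP2.comp y hinner
    simpa [Function.comp_def, pdY] using h.deriv
  -- pdX, pdXX of w
  have hA1 : pdX (fun x y t => u x ((Real.sqrt y - LSc e ε t)^2) t) x y t
      = pdX u x ((Real.sqrt y - LSc e ε t)^2) t := rfl
  have hA2 : pdXX (fun x y t => u x ((Real.sqrt y - LSc e ε t)^2) t) x y t
      = pdXX u x ((Real.sqrt y - LSc e ε t)^2) t := rfl
  -- pdT of w
  have hcurveMid : HasDerivAt (fun τ => (Real.sqrt y - LSc e ε τ)^2)
      (e * LSc e ε t * (Real.sqrt y - LSc e ε t)) t := by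
    have h := ((hasDerivAt_const t (Real.sqrt y)).sub (LSc_hasDerivAt e ε t)).pow 2
    refine h.congr_deriv (Eq.symm ?_)
    simp only [Pi.sub_apply]
    ring
  have hcurve : HasDerivAt (fun τ => ((x, (Real.sqrt y - LSc e ε τ)^2, τ) : ℝ×ℝ×ℝ))
      ((0:ℝ), e * LSc e ε t * (Real.sqrt y - LSc e ε t), (1:ℝ)) t :=
    (hasDerivAt_const t x).prodMk (hcurveMid.prodMk (hasDerivAt_id t))
  have hTh : HasDerivAt (fun τ => u x ((Real.sqrt y - LSc e ε τ)^2) τ)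
      (fderiv ℝ (fun p : ℝ×ℝ×ℝ => u p.1 p.2.1 p.2.2) (x, (Real.sqrt y - LSc e ε t)^2, t)
        ((0:ℝ), e * LSc e ε t * (Real.sqrt y - LSc e ε t), (1:ℝ))) t := by
    simpa [Function.comp_def] using hdU.hasFDerivAt.comp_hasDerivAt t hcurve
  have hCt : pdT (fun x y t => u x ((Real.sqrt y - LSc e ε t)^2) t) x y t
      = e * LSc e ε t * (Real.sqrt y - LSc e ε t) * pdY u x ((Real.sqrt y - LSc e ε t)^2) t
        + pdT u x ((Real.sqrt y - LSc e ε t)^2) t := by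
    have h := hTh.deriv
    rw [split3, ← hP2eq, ← hP3eq] at h
    exact h
  -- pdYY u at the shifted point as second fderiv
  have hpdYYeq : pdYY u x ((Real.sqrt y - LSc e ε t)^2) t
      = fderiv ℝ (fun p => fderiv ℝ (fun p : ℝ×ℝ×ℝ => u p.1 p.2.1 p.2.2) p ((0:ℝ),(1:ℝ),(0:ℝ)))
          (x, (Real.sqrt y - LSc e ε t)^2, t) ((0:ℝ),(1:ℝ),(0:ℝ)) := by
    have hEv2 : (fun z => pdY u x z t) =ᶠ[nhds ((Real.sqrt y - LSc e ε t)^2)]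
        (fun z => fderiv ℝ (fun p : ℝ×ℝ×ℝ => u p.1 p.2.1 p.2.2) (x,z,t) ((0:ℝ),(1:ℝ),(0:ℝ))) := by
      filter_upwards [Ioi_mem_nhds hT] with z hz
      exact (sliceY_gen _ (hdiff (x,z,t) ⟨hx, hz⟩)).deriv
    exact hEv2.deriv_eq.trans (sliceY_gen _ hVat).deriv
  -- pdYY of w
  have hEv : (fun z => pdY (fun x y t => u x ((Real.sqrt y - LSc e ε t)^2) t) x z t) =ᶠ[nhds y]
      (fun z => fderiv ℝ (fun p : ℝ×ℝ×ℝ => u p.1 p.2.1 p.2.2) (x, (Real.sqrt z - LSc e ε t)^2, t)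
        ((0:ℝ),(1:ℝ),(0:ℝ)) * ((Real.sqrt z - LSc e ε t)/Real.sqrt z)) := by
    have hN : (Set.Ioi (0:ℝ) ∩ Real.sqrt ⁻¹' Set.Ioi (LSc e ε t)) ∈ nhds y :=
      ((isOpen_Ioi).inter (isOpen_Ioi.preimage Real.continuous_sqrt)).mem_nhds ⟨hy, hsc⟩
    filter_upwards [hN] with z hz
    obtain ⟨hz0, hzc⟩ := hz
    have hgz : (0:ℝ) < Real.sqrt z - LSc e ε t := sub_pos.2 hzc
    have hdz := hdiff (x, (Real.sqrt z - LSc e ε t)^2, t) ⟨hx, pow_pos hgz 2⟩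
    have hP2z := sliceY_gen (fun p : ℝ×ℝ×ℝ => u p.1 p.2.1 p.2.2) hdz
    have hinnz : HasDerivAt (fun w => (Real.sqrt w - LSc e ε t)^2)
        ((Real.sqrt z - LSc e ε t)/Real.sqrt z) z := by
      have h := ((Real.hasDerivAt_sqrt (ne_of_gt hz0)).sub_const (LSc e ε t)).pow 2
      refine h.congr_deriv (Eq.symm ?_)
      field_simp
      ring
    have h := hP2z.comp z hinnz
    simpa [Function.comp_def, pdY] using h.deriv
  have hGcurve : HasDerivAt (fun z => ((x, (Real.sqrt z - LSc e ε t)^2, t) : ℝ×ℝ×ℝ))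
      ((0:ℝ), (Real.sqrt y - LSc e ε t)/Real.sqrt y, (0:ℝ)) y :=
    (hasDerivAt_const y x).prodMk (hinner.prodMk (hasDerivAt_const y t))
  have hG : HasDerivAt (fun z => fderiv ℝ (fun p : ℝ×ℝ×ℝ => u p.1 p.2.1 p.2.2)
        (x, (Real.sqrt z - LSc e ε t)^2, t) ((0:ℝ),(1:ℝ),(0:ℝ)))
      (fderiv ℝ (fun p => fderiv ℝ (fun p : ℝ×ℝ×ℝ => u p.1 p.2.1 p.2.2) p ((0:ℝ),(1:ℝ),(0:ℝ)))
        (x, (Real.sqrt y - LSc e ε t)^2, t)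
        ((0:ℝ), (Real.sqrt y - LSc e ε t)/Real.sqrt y, (0:ℝ))) y := by
    simpa [Function.comp_def] using hVat.hasFDerivAt.comp_hasDerivAt y hGcurve
  have hH : HasDerivAt (fun z => (Real.sqrt z - LSc e ε t)/Real.sqrt z)
      (LSc e ε t/(2*Real.sqrt y^3)) y := by
    have h := ((Real.hasDerivAt_sqrt hy.ne').sub_const (LSc e ε t)).div
      (Real.hasDerivAt_sqrt hy.ne') hs0.ne'
    refine h.congr_deriv (Eq.symm ?_)
    field_simp
    ring
  have hD : pdYY (fun x y t => u x ((Real.sqrt y - LSc e ε t)^2) t) x y t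
      = ((Real.sqrt y - LSc e ε t)/Real.sqrt y
          * pdYY u x ((Real.sqrt y - LSc e ε t)^2) t)
          * ((Real.sqrt y - LSc e ε t)/Real.sqrt y)
        + pdY u x ((Real.sqrt y - LSc e ε t)^2) t * (LSc e ε t/(2*Real.sqrt y^3)) := by
    have h := (hG.mul hH).deriv
    simp only [Pi.mul_def] at h
    have h2 : pdYY (fun x y t => u x ((Real.sqrt y - LSc e ε t)^2) t) x y t
        = deriv (fun z => fderiv ℝ (fun p : ℝ×ℝ×ℝ => u p.1 p.2.1 p.2.2)
            (x, (Real.sqrt z - LSc e ε t)^2, t) ((0:ℝ),(1:ℝ),(0:ℝ))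
            * ((Real.sqrt z - LSc e ε t)/Real.sqrt z)) y := hEv.deriv_eq
    rw [h2, h, splitY, ← hP2eq, ← hpdYYeq]
  -- the equation for u at the shifted point
  have hueq := hEq x ((Real.sqrt y - LSc e ε t)^2) t hx hT
  rw [LSEq] at hueq ⊢
  rw [hCt, hA1, hA2, hB, hD]
  have key := algebra_key a b e x y (Real.sqrt y) (LSc e ε t)
    (pdX u x ((Real.sqrt y - LSc e ε t)^2) t) (pdY u x ((Real.sqrt y - LSc e ε t)^2) t)
    (pdXX u x ((Real.sqrt y - LSc e ε t)^2) t) (pdYY u x ((Real.sqrt y - LSc e ε t)^2) t)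
    (pdT u x ((Real.sqrt y - LSc e ε t)^2) t) hs0.ne' hs2 hueq
  linear_combination key

/-- Symmetry of the Longstaff–Schwartz equation when `d = 1/4` (subcase 4.1, group `G₄`). -/
theorem ls_symmetry_d_quarter_translation (a b d e : ℝ) (hd : d = 1 / 4)
    (u : ℝ → ℝ → ℝ → ℝ) (hu : IsLSSolution a b d e u) (ε : ℝ) :
    ∀ x y t : ℝ, 0 < x → 0 < y → 2 * Real.exp (e * t / 2) * Real.sqrt y > ε →
      LSEq a b d e
        (fun x y t =>
          u x ((2 * Real.exp (e * t / 2) * Real.sqrt y - ε) ^ 2 * Real.exp (-(e * t)) / 4) t)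
        x y t := by

  subst hd
  obtain ⟨hC2, hEq⟩ := hu
  intro x y t hx hy hcond
  have hfun : (fun x y t => u x ((2 * Real.exp (e * t / 2) * Real.sqrt y - ε) ^ 2 * Real.exp (-(e * t)) / 4) t)
      = (fun x y t => u x ((Real.sqrt y - LSc e ε t)^2) t) := by
    funext x' y' t'
    congr 1
    have h1 : Real.exp (e*t'/2) * Real.exp (-(e*t')/2) = 1 := by
      rw [← Real.exp_add]; ring_nf; exact Real.exp_zero
    have h2 : Real.exp (-(e*t')) = Real.exp (-(e*t')/2) * Real.exp (-(e*t')/2) := by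
      rw [← Real.exp_add]; ring_nf
    rw [LSc, h2]
    linear_combination ((Real.exp (e*t'/2)*Real.exp (-(e*t')/2) + 1) * Real.sqrt y'^2
      - ε * Real.sqrt y' * Real.exp (-(e*t')/2)) * h1
  have hsc : LSc e ε t < Real.sqrt y := by
    have hp : (0:ℝ) < Real.exp (-(e*t)/2) := Real.exp_pos _
    have h1 : Real.exp (e*t/2) * Real.exp (-(e*t)/2) = 1 := by
      rw [← Real.exp_add]; ring_nf; exact Real.exp_zero
    have h3 : 2 * Real.exp (e*t/2) * Real.sqrt y * Real.exp (-(e*t)/2) = 2 * Real.sqrt y := by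
      linear_combination 2 * Real.sqrt y * h1
    have h4 := mul_lt_mul_of_pos_right hcond hp
    rw [LSc]
    nlinarith [h4, h3]
  rw [hfun]
  exact core a b e u hC2 hEq ε x y t hx hy hsc
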